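/- Let G be a DAG over latent nodes X*_1,...,X*_d and observed nodes X_1,...,X_d where each X_j has exactly one parent X*_j and no children. If X*_s is a sink node in the induced latent subgraph (no children among X*), then the mutilated graph obtained by removing all edges into X*_s and the mutilated graph obtained by removing the edge X*_s → X_s imply the same d-separation constraints over the observed variables X_1,...,X_d. -/

import Mathlib

/-- A collider pattern `a → b ← c` in the digraph `G`. -/
def Collider {V : Type*} (G : V → V → Prop) (a b c : V) : Prop := G a b ∧ G c b

/-- The list of consecutive triples of a list. -/
def triples {α : Type*} : List α → List (α × α × α)
  | a :: b :: c :: rest => (a, b, c) :: triples (b :: c :: rest)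
  | _ => []

/-- A trail (undirected walk) in the digraph `G`. -/
def IsTrail {V : Type*} (G : V → V → Prop) (p : List V) : Prop :=
  List.Chain' (fun x y => G x y ∨ G y x) p

/-- The middle vertex of a consecutive triple blocks the trail given the
conditioning set `Z`: either it is a collider with no descendant in `Z`, or a
non-collider lying in `Z`. -/
def BlockedAt {V : Type*} (G : V → V → Prop) (Z : Set V) (t : V × V × V) : Prop :=
  (Collider G t.1 t.2.1 t.2.2 ∧ ∀ w, Relation.ReflTransGen G t.2.1 w → w ∉ Z) ∨
  (¬ Collider G t.1 t.2.1 t.2.2 ∧ t.2.1 ∈ Z)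

/-- A trail is blocked by `Z` if some interior vertex blocks it. -/
def Blocked {V : Type*} (G : V → V → Prop) (Z : Set V) (p : List V) : Prop :=
  ∃ t ∈ triples p, BlockedAt G Z t

/-- An active (unblocked) trail from `a` to `b` given `Z`. -/
def ActiveTrail {V : Type*} (G : V → V → Prop) (Z : Set V) (a b : V) (p : List V) : Prop :=
  IsTrail G p ∧ p.head? = some a ∧ p.getLast? = some b ∧ 2 ≤ p.length ∧ ¬ Blocked G Z p

/-- `A` and `B` are d-separated by `Z` in `G`. -/
def DSep {V : Type*} (G : V → V → Prop) (A B Z : Set V) : Prop :=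
  ∀ a ∈ A, ∀ b ∈ B, ¬ ∃ p : List V, ActiveTrail G Z a b p

/-- Two DAGs are observationally equivalent with respect to the observed vertex set `O`
if they imply exactly the same conditional independence (d-separation) constraints
over disjoint subsets of `O`. -/
def ObsEquiv {V : Type*} (G G' : V → V → Prop) (O : Set V) : Prop :=
  ∀ A B Z : Set V, A ⊆ O → B ⊆ O → Z ⊆ O →
    Disjoint A B → Disjoint A Z → Disjoint B Z →
    (DSep G A B Z ↔ DSep G' A B Z)

section helpers
variable {α : Type*}

lemma triples_mem : ∀ {p : List α} {t : α × α × α}, t ∈ triples p →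
    t.1 ∈ p ∧ t.2.1 ∈ p ∧ t.2.2 ∈ p := by
  intro p
  induction p with
  | nil => intro t h; simp [triples] at h
  | cons a q ih =>
    intro t h
    rcases q with _ | ⟨b, _ | ⟨c, r⟩⟩
    · simp [triples] at h
    · simp [triples] at h
    · simp only [triples, List.mem_cons] at h
      rcases h with h | h
      · subst h; simp
      · obtain ⟨h1, h2, h3⟩ := ih h
        exact ⟨List.mem_cons_of_mem _ h1, List.mem_cons_of_mem _ h2,
          List.mem_cons_of_mem _ h3⟩

lemma exists_triple_of_mem : ∀ {p : List α} {x : α}, x ∈ p →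
    p.head? ≠ some x → p.getLast? ≠ some x → ∃ u w, (u, x, w) ∈ triples p := by
  intro p
  induction p with
  | nil => intro x hx _ _; simp at hx
  | cons a q ih =>
    intro x hx hh hl
    have hxa : x ≠ a := by intro h; subst h; simp at hh
    have hx' : x ∈ q := by rcases List.mem_cons.mp hx with h | h; exact absurd h hxa; exact h
    rcases q with _ | ⟨b, _ | ⟨c, r⟩⟩
    · simp at hx'
    · have : x = b := by simpa using hx'
      subst this
      exact absurd (by simp [List.getLast?]) hl
    · by_cases hxb : x = b
      · subst hxb
        exact ⟨a, c, by simp [triples]⟩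
      · have hx'' : x ∈ b :: c :: r := hx'
        have hh' : (b :: c :: r).head? ≠ some x := by
          intro h; exact hxb ((by simpa using h : b = x).symm)
        have hl' : (b :: c :: r).getLast? ≠ some x := by
          intro h; apply hl; rw [← h]; simp [List.getLast?_cons_cons]
        obtain ⟨u, w, hw⟩ := ih hx'' hh' hl'
        exact ⟨u, w, by simp only [triples, List.mem_cons]; right; exact hw⟩

lemma exists_adj {R : α → α → Prop} : ∀ {p : List α}, List.Chain' R p → 2 ≤ p.length →
    ∀ {x}, x ∈ p → ∃ y, R x y ∨ R y x := by
  intro p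
  induction p with
  | nil => intro _ h; simp at h
  | cons a q ih =>
    intro hc hlen x hx
    rcases q with _ | ⟨b, r⟩
    · simp at hlen
    · have hab : R a b := (List.isChain_cons_cons.mp hc).1
      have hq : List.Chain' R (b :: r) := (List.isChain_cons_cons.mp hc).2
      rcases List.mem_cons.mp hx with h | h
      · exact ⟨b, Or.inl (h ▸ hab)⟩
      · rcases r with _ | ⟨c, r'⟩
        · have : x = b := by simpa using h
          exact ⟨a, Or.inr (this ▸ hab)⟩
        · exact ih hq (by simp) h

lemma chain'_closed {R : α → α → Prop} {S : α → Prop}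
    (hRS : ∀ x y, R x y → (S x ↔ S y)) :
    ∀ {p : List α}, List.Chain' R p → ∀ x ∈ p, S x → ∀ y ∈ p, S y := by
  intro p
  induction p with
  | nil => intro _ x hx; simp at hx
  | cons a q ih =>
    intro hc x hx hSx y hy
    rcases q with _ | ⟨b, r⟩
    · have hxa : x = a := by simpa using hx
      have hya : y = a := by simpa using hy
      subst hxa; subst hya; exact hSx
    · have hab : R a b := (List.isChain_cons_cons.mp hc).1
      have hq : List.Chain' R (b :: r) := (List.isChain_cons_cons.mp hc).2
      have hiff : S a ↔ S b := hRS a b hab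
      have key : S b → ∀ y ∈ b :: r, S y := fun hSb => ih hq b (by simp) hSb
      rcases List.mem_cons.mp hx with hxa | hxq
      · subst hxa
        have hSb : S b := hiff.mp hSx
        rcases List.mem_cons.mp hy with hya | hyq
        · subst hya; exact hSx
        · exact key hSb y hyq
      · have hall := ih hq x hxq hSx
        have hSb : S b := hall b (by simp)
        rcases List.mem_cons.mp hy with hya | hyq
        · subst hya; exact hiff.mpr hSb
        · exact hall y hyq

lemma chain'_congr {R S : α → α → Prop} :
    ∀ {p : List α}, (∀ x ∈ p, ∀ y ∈ p, (R x y ↔ S x y)) →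
      (List.Chain' R p ↔ List.Chain' S p) := by
  intro p
  induction p with
  | nil => intro _; simp [List.Chain']
  | cons a q ih =>
    intro h
    rcases q with _ | ⟨b, r⟩
    · simp [List.Chain']
    · rw [show List.Chain' R (a :: b :: r) ↔ R a b ∧ List.Chain' R (b :: r) from List.isChain_cons_cons,
        show List.Chain' S (a :: b :: r) ↔ S a b ∧ List.Chain' S (b :: r) from List.isChain_cons_cons]
      have h1 : R a b ↔ S a b := h a (by simp) b (by simp)
      have h2 := ih (fun x hx y hy => h x (List.mem_cons_of_mem _ hx) y (List.mem_cons_of_mem _ hy))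
      rw [h1, h2]

end helpers

theorem mem_of_getLast?_eq {α : Type*} {l : List α} {a : α} (h : l.getLast? = some a) : a ∈ l := by
  have : a ∈ l.getLast? := by rw [h]; rfl
  obtain ⟨h', h2⟩ := List.mem_getLast?_eq_getLast this
  exact h2 ▸ List.getLast_mem h'

lemma triples_chain' {α : Type*} {R : α → α → Prop} :
    ∀ {p : List α}, List.Chain' R p → ∀ {x y z : α}, (x, y, z) ∈ triples p →
      R x y ∧ R y z := by
  intro p
  induction p with
  | nil => intro _ x y z h; simp [triples] at h
  | cons a q ih =>
    intro hc x y z h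
    rcases q with _ | ⟨b, _ | ⟨c, r⟩⟩
    · simp [triples] at h
    · simp [triples] at h
    · have hab : R a b := (List.isChain_cons_cons.mp hc).1
      have hq : List.Chain' R (b :: c :: r) := (List.isChain_cons_cons.mp hc).2
      have hbc : R b c := (List.isChain_cons_cons.mp hq).1
      simp only [triples, List.mem_cons] at h
      rcases h with h | h
      · simp only [Prod.mk.injEq] at h
        obtain ⟨rfl, rfl, rfl⟩ := h
        exact ⟨hab, hbc⟩
      · exact ih hq h

section graphlemmas

variable {d : ℕ} {G : (Fin d ⊕ Fin d) → (Fin d ⊕ Fin d) → Prop} {s : Fin d}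

-- the only possible child of `inl s` is `inr s`
lemma factA (hobs_parent : ∀ (j : Fin d) (v : Fin d ⊕ Fin d), G v (Sum.inr j) ↔ v = Sum.inl j)
    (hsink : ∀ j : Fin d, ¬ G (Sum.inl s) (Sum.inl j))
    {u : Fin d ⊕ Fin d} (h : G (Sum.inl s) u) : u = Sum.inr s := by
  rcases u with j | j
  · exact absurd h (hsink j)
  · have := (hobs_parent j _).mp h
    rw [Sum.inl.injEq] at this
    rw [this]

-- the only parent of `inr s` is `inl s`
lemma factB (hobs_parent : ∀ (j : Fin d) (v : Fin d ⊕ Fin d), G v (Sum.inr j) ↔ v = Sum.inl j)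
    {v : Fin d ⊕ Fin d} (h : G v (Sum.inr s)) : v = Sum.inl s :=
  (hobs_parent s v).mp h

lemma reach1
    (hobs_parent : ∀ (j : Fin d) (v : Fin d ⊕ Fin d), G v (Sum.inr j) ↔ v = Sum.inl j)
    {m w : Fin d ⊕ Fin d} (hm1 : m ≠ Sum.inl s) (hm2 : m ≠ Sum.inr s)
    (h : Relation.ReflTransGen (fun v u => G v u ∧ u ≠ Sum.inl s) m w) :
    Relation.ReflTransGen (fun v u => G v u ∧ ¬ (v = Sum.inl s ∧ u = Sum.inr s)) m w ∧
      w ≠ Sum.inl s ∧ w ≠ Sum.inr s := by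
  induction h with
  | refl => exact ⟨Relation.ReflTransGen.refl, hm1, hm2⟩
  | tail _ e ih =>
    obtain ⟨hr, hb1, hb2⟩ := ih
    refine ⟨hr.tail ⟨e.1, fun hc => hb1 hc.1⟩, e.2, fun hc => ?_⟩
    exact hb1 (factB hobs_parent (hc ▸ e.1))

lemma reach2
    (hobs_parent : ∀ (j : Fin d) (v : Fin d ⊕ Fin d), G v (Sum.inr j) ↔ v = Sum.inl j)
    (hsink : ∀ j : Fin d, ¬ G (Sum.inl s) (Sum.inl j))
    {m w : Fin d ⊕ Fin d} (hm1 : m ≠ Sum.inl s) (hm2 : m ≠ Sum.inr s)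
    (h : Relation.ReflTransGen (fun v u => G v u ∧ ¬ (v = Sum.inl s ∧ u = Sum.inr s)) m w) :
    w = Sum.inl s ∨
      (Relation.ReflTransGen (fun v u => G v u ∧ u ≠ Sum.inl s) m w ∧
        w ≠ Sum.inl s ∧ w ≠ Sum.inr s) := by
  induction h with
  | refl => exact Or.inr ⟨Relation.ReflTransGen.refl, hm1, hm2⟩
  | @tail b c _ e ih =>
    rcases ih with hb | ⟨hr, hb1, hb2⟩
    · subst hb
      exact absurd ⟨rfl, factA hobs_parent hsink e.1⟩ e.2
    · by_cases hc : c = Sum.inl s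
      · exact Or.inl hc
      · refine Or.inr ⟨hr.tail ⟨e.1, hc⟩, hc, fun hc2 => ?_⟩
        exact hb1 (factB hobs_parent (hc2 ▸ e.1))

lemma edge_iff {x y : Fin d ⊕ Fin d} (hx : x ≠ Sum.inl s) (hy : y ≠ Sum.inl s) :
    (G x y ∧ y ≠ Sum.inl s) ↔ (G x y ∧ ¬ (x = Sum.inl s ∧ y = Sum.inr s)) := by
  constructor
  · exact fun h => ⟨h.1, fun h' => hx h'.1⟩
  · exact fun h => ⟨h.1, hy⟩

lemma blockedAt_iff
    (hobs_parent : ∀ (j : Fin d) (v : Fin d ⊕ Fin d), G v (Sum.inr j) ↔ v = Sum.inl j)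
    (hsink : ∀ j : Fin d, ¬ G (Sum.inl s) (Sum.inl j))
    {Z : Set (Fin d ⊕ Fin d)} (hZ : Sum.inl s ∉ Z)
    {u m w : Fin d ⊕ Fin d} (hu : u ≠ Sum.inl s) (hm1 : m ≠ Sum.inl s)
    (hm2 : m ≠ Sum.inr s) (hw : w ≠ Sum.inl s) :
    BlockedAt (fun v u => G v u ∧ u ≠ Sum.inl s) Z (u, m, w) ↔
      BlockedAt (fun v u => G v u ∧ ¬ (v = Sum.inl s ∧ u = Sum.inr s)) Z (u, m, w) := by
  have hcol : Collider (fun v u => G v u ∧ u ≠ Sum.inl s) u m w ↔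
      Collider (fun v u => G v u ∧ ¬ (v = Sum.inl s ∧ u = Sum.inr s)) u m w := by
    unfold Collider
    simp only []
    rw [edge_iff hu hm1, edge_iff hw hm1]
  have hdesc : (∀ v, Relation.ReflTransGen (fun v u => G v u ∧ u ≠ Sum.inl s) m v → v ∉ Z) ↔
      (∀ v, Relation.ReflTransGen
        (fun v u => G v u ∧ ¬ (v = Sum.inl s ∧ u = Sum.inr s)) m v → v ∉ Z) := by
    constructor
    · intro h v hv
      rcases reach2 hobs_parent hsink hm1 hm2 hv with rfl | ⟨hr, _, _⟩
      · exact hZ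
      · exact h v hr
    · intro h v hv
      exact h v (reach1 hobs_parent hm1 hm2 hv).1
  unfold BlockedAt
  simp only []
  rw [hcol, hdesc]

end graphlemmas

section mainlemmas
variable {d : ℕ} {G : (Fin d ⊕ Fin d) → (Fin d ⊕ Fin d) → Prop} {s : Fin d}

lemma rtg_from_inl
    (hobs_parent : ∀ (j : Fin d) (v : Fin d ⊕ Fin d), G v (Sum.inr j) ↔ v = Sum.inl j)
    (hsink : ∀ j : Fin d, ¬ G (Sum.inl s) (Sum.inl j))
    {v : Fin d ⊕ Fin d}
    (h : Relation.ReflTransGen (fun v u => G v u ∧ ¬ (v = Sum.inl s ∧ u = Sum.inr s))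
      (Sum.inl s) v) : v = Sum.inl s := by
  induction h with
  | refl => rfl
  | @tail b c _ e ih =>
    subst ih
    exact absurd ⟨rfl, factA hobs_parent hsink e.1⟩ e.2

lemma good1
    (hobs_parent : ∀ (j : Fin d) (v : Fin d ⊕ Fin d), G v (Sum.inr j) ↔ v = Sum.inl j)
    (hobs_nochild : ∀ (j : Fin d) (v : Fin d ⊕ Fin d), ¬ G (Sum.inr j) v)
    (hsink : ∀ j : Fin d, ¬ G (Sum.inl s) (Sum.inl j))
    {Z : Set (Fin d ⊕ Fin d)} {a b : Fin d ⊕ Fin d} {p : List (Fin d ⊕ Fin d)}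
    (hp : ActiveTrail (fun v u => G v u ∧ u ≠ Sum.inl s) Z a b p)
    (ha : a ∈ Set.range (Sum.inr : Fin d → Fin d ⊕ Fin d))
    (hb : b ∈ Set.range (Sum.inr : Fin d → Fin d ⊕ Fin d))
    (hab : a ≠ b) :
    ∀ x ∈ p, x ≠ Sum.inl s ∧ x ≠ Sum.inr s := by
  obtain ⟨htrail, hhead, hlast, hlen, hnb⟩ := hp
  set S : (Fin d ⊕ Fin d) → Prop := fun x => x = Sum.inl s ∨ x = Sum.inr s with hS
  have hone : ∀ x y : Fin d ⊕ Fin d, (G x y ∧ y ≠ Sum.inl s) → (S x ↔ S y) := by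
    rintro x y ⟨hxy, hy⟩
    constructor
    · rintro (rfl | rfl)
      · exact Or.inr (factA hobs_parent hsink hxy)
      · exact absurd hxy (hobs_nochild s y)
    · rintro (rfl | rfl)
      · exact absurd rfl hy
      · exact Or.inl (factB hobs_parent hxy)
  have hRS : ∀ x y : Fin d ⊕ Fin d,
      ((G x y ∧ y ≠ Sum.inl s) ∨ (G y x ∧ x ≠ Sum.inl s)) → (S x ↔ S y) := by
    rintro x y (h | h)
    · exact hone x y h
    · exact (hone y x h).symm
  intro x hx
  have hnS : ¬ S x := by
    intro hSx
    have hall := chain'_closed hRS htrail x hx hSx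
    have hamem : a ∈ p := List.mem_of_mem_head? (by rw [hhead]; rfl)
    have hbmem : b ∈ p := mem_of_getLast?_eq hlast
    obtain ⟨i, rfl⟩ := ha
    obtain ⟨j, rfl⟩ := hb
    have hai : (Sum.inr i : Fin d ⊕ Fin d) = Sum.inr s := by
      rcases hall _ hamem with h | h
      · exact absurd h (by simp)
      · exact h
    have hbj : (Sum.inr j : Fin d ⊕ Fin d) = Sum.inr s := by
      rcases hall _ hbmem with h | h
      · exact absurd h (by simp)
      · exact h
    exact hab (hai.trans hbj.symm)
  exact ⟨fun h => hnS (Or.inl h), fun h => hnS (Or.inr h)⟩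

lemma good2
    (hobs_parent : ∀ (j : Fin d) (v : Fin d ⊕ Fin d), G v (Sum.inr j) ↔ v = Sum.inl j)
    (hobs_nochild : ∀ (j : Fin d) (v : Fin d ⊕ Fin d), ¬ G (Sum.inr j) v)
    (hsink : ∀ j : Fin d, ¬ G (Sum.inl s) (Sum.inl j))
    {Z : Set (Fin d ⊕ Fin d)} {a b : Fin d ⊕ Fin d} {p : List (Fin d ⊕ Fin d)}
    (hp : ActiveTrail (fun v u => G v u ∧ ¬ (v = Sum.inl s ∧ u = Sum.inr s)) Z a b p)
    (ha : a ∈ Set.range (Sum.inr : Fin d → Fin d ⊕ Fin d))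
    (hb : b ∈ Set.range (Sum.inr : Fin d → Fin d ⊕ Fin d))
    (hZl : Sum.inl s ∉ Z) :
    ∀ x ∈ p, x ≠ Sum.inl s ∧ x ≠ Sum.inr s := by
  obtain ⟨htrail, hhead, hlast, hlen, hnb⟩ := hp
  have hnout : ∀ c : Fin d ⊕ Fin d,
      ¬ (G (Sum.inl s) c ∧ ¬ ((Sum.inl s : Fin d ⊕ Fin d) = Sum.inl s ∧ c = Sum.inr s)) := by
    intro c hc
    exact hc.2 ⟨rfl, factA hobs_parent hsink hc.1⟩
  intro x hx
  constructor
  · rintro rfl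
    have hh : p.head? ≠ some (Sum.inl s) := by
      rw [hhead]
      intro h
      obtain ⟨i, hi⟩ := ha
      rw [← hi] at h
      simp at h
    have hl : p.getLast? ≠ some (Sum.inl s) := by
      rw [hlast]
      intro h
      obtain ⟨j, hj⟩ := hb
      rw [← hj] at h
      simp at h
    obtain ⟨u, w, ht⟩ := exists_triple_of_mem hx hh hl
    obtain ⟨e1, e2⟩ := triples_chain' htrail ht
    have he1 : G u (Sum.inl s) ∧ ¬ (u = Sum.inl s ∧ Sum.inl s = Sum.inr s) :=
      e1.resolve_right (hnout u)
    have he2 : G w (Sum.inl s) ∧ ¬ (w = Sum.inl s ∧ Sum.inl s = Sum.inr s) :=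
      e2.resolve_left (hnout w)
    apply hnb
    refine ⟨(u, Sum.inl s, w), ht, Or.inl ⟨⟨he1, he2⟩, fun v hv => ?_⟩⟩
    rw [rtg_from_inl hobs_parent hsink hv]
    exact hZl
  · rintro rfl
    obtain ⟨y, hy⟩ := exists_adj htrail hlen hx
    rcases hy with (hy | hy) | (hy | hy)
    · exact hobs_nochild s y hy.1
    · exact hy.2 ⟨factB hobs_parent hy.1, rfl⟩
    · exact hy.2 ⟨factB hobs_parent hy.1, rfl⟩
    · exact hobs_nochild s y hy.1

lemma transfer
    (hobs_parent : ∀ (j : Fin d) (v : Fin d ⊕ Fin d), G v (Sum.inr j) ↔ v = Sum.inl j)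
    (hsink : ∀ j : Fin d, ¬ G (Sum.inl s) (Sum.inl j))
    {Z : Set (Fin d ⊕ Fin d)} {a b : Fin d ⊕ Fin d} {p : List (Fin d ⊕ Fin d)}
    (hZl : Sum.inl s ∉ Z)
    (hgood : ∀ x ∈ p, x ≠ Sum.inl s ∧ x ≠ Sum.inr s) :
    (ActiveTrail (fun v u => G v u ∧ u ≠ Sum.inl s) Z a b p ↔
      ActiveTrail (fun v u => G v u ∧ ¬ (v = Sum.inl s ∧ u = Sum.inr s)) Z a b p) := by
  have htrail : IsTrail (fun v u => G v u ∧ u ≠ Sum.inl s) p ↔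
      IsTrail (fun v u => G v u ∧ ¬ (v = Sum.inl s ∧ u = Sum.inr s)) p := by
    unfold IsTrail
    refine chain'_congr (fun x hx y hy => ?_)
    exact or_congr (edge_iff (hgood x hx).1 (hgood y hy).1)
      (edge_iff (hgood y hy).1 (hgood x hx).1)
  have hblocked : Blocked (fun v u => G v u ∧ u ≠ Sum.inl s) Z p ↔
      Blocked (fun v u => G v u ∧ ¬ (v = Sum.inl s ∧ u = Sum.inr s)) Z p := by
    unfold Blocked
    constructor
    · rintro ⟨⟨u, m, w⟩, ht, hbl⟩
      obtain ⟨hu, hm, hw⟩ := triples_mem ht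
      exact ⟨(u, m, w), ht, (blockedAt_iff hobs_parent hsink hZl (hgood u hu).1
        (hgood m hm).1 (hgood m hm).2 (hgood w hw).1).mp hbl⟩
    · rintro ⟨⟨u, m, w⟩, ht, hbl⟩
      obtain ⟨hu, hm, hw⟩ := triples_mem ht
      exact ⟨(u, m, w), ht, (blockedAt_iff hobs_parent hsink hZl (hgood u hu).1
        (hgood m hm).1 (hgood m hm).2 (hgood w hw).1).mpr hbl⟩
  unfold ActiveTrail
  rw [htrail, hblocked]

end mainlemmas

/-- let `G` be a DAG over latent nodes `X*₁, …, X*_d` (encoded `Sum.inl j`)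
and observed nodes `X₁, …, X_d` (encoded `Sum.inr j`), where each observed node `X_j` has
exactly one parent `X*_j` and no children.  If `X*_s` is a sink of the induced latent
subgraph, then the mutilation removing all edges into `X*_s` (mechanistic intervention)
and the mutilation removing the edge `X*_s → X_s` (measurement intervention) imply the
same d-separation constraints over the observed variables. -/
theorem sink_mech_meas_obsEquiv {d : ℕ}
    (G : (Fin d ⊕ Fin d) → (Fin d ⊕ Fin d) → Prop)
    (hacyclic : ∀ v, ¬ Relation.TransGen G v v)
    (hobs_parent : ∀ (j : Fin d) (v : Fin d ⊕ Fin d), G v (Sum.inr j) ↔ v = Sum.inl j)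
    (hobs_nochild : ∀ (j : Fin d) (v : Fin d ⊕ Fin d), ¬ G (Sum.inr j) v)
    (s : Fin d)
    (hsink : ∀ j : Fin d, ¬ G (Sum.inl s) (Sum.inl j)) :
    ObsEquiv
      (fun v u => G v u ∧ u ≠ Sum.inl s)
      (fun v u => G v u ∧ ¬ (v = Sum.inl s ∧ u = Sum.inr s))
      (Set.range (Sum.inr : Fin d → Fin d ⊕ Fin d)) := by
  intro A B Z hA hB hZ hAB hAZ hBZ
  have hZl : Sum.inl s ∉ Z := by
    intro h
    obtain ⟨j, hj⟩ := hZ h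
    simp at hj
  constructor
  · intro h a ha b hb hex
    obtain ⟨p, hp⟩ := hex
    have hgood := good2 hobs_parent hobs_nochild hsink hp (hA ha) (hB hb) hZl
    exact h a ha b hb ⟨p, (transfer hobs_parent hsink hZl hgood).mpr hp⟩
  · intro h a ha b hb hex
    obtain ⟨p, hp⟩ := hex
    have hab : a ≠ b := fun e => (Set.disjoint_left.mp hAB ha) (e ▸ hb)
    have hgood := good1 hobs_parent hobs_nochild hsink hp (hA ha) (hB hb) hab
    exact h a ha b hb ⟨p, (transfer hobs_parent hsink hZl hgood).mp hp⟩
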